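/- Let T₀ > 0. Assume: φ ∈ C([0,∞)) with φ(0) = 0, φ > 0 on (0,∞) and φ strictly increasing on (0,∞); f ∈ C(ℝ) with f ≥ 0 on (0,η₀) for some η₀ > 0; l ∈ C([0,∞)) with l ≥ 0; f(0)·l(0) = 0; ℘ ∈ C¹([0,T₀]) with ℘ > 0 on [0,T₀]; a ∈ C([0,T₀]) with a > 0 on [0,T₀]. Set ℘₀ = min_{[0,T₀]} ℘, ℘₁ = max_{[0,T₀]} ℘, f_η = max_{[0,η]} f, l_ξ = max_{[0,ξ]} l, and Θ(T) = sup_{t∈[0,T]} (1/℘(t))·∫₀^t ℘(s)a(s) ds. Fix ξ > 0, T ∈ (0,T₀) and η ∈ (0,η₀) such that (℘₁/℘₀)·φ(η/T) + 2·Θ(T)·f_η·l_ξ < φ(ξ). Then there exists w ∈ C¹([0,T]) such that: w(0) = 0, w(T) = η, 0 ≤ w ≤ η on [0,T]; the function t ↦ ℘(t)·φ(w'(t)) is differentiable at every t ∈ (0,T) with derivative ℘(t)·a(t)·f(w(t))·l(|w'(t)|); and w' ≥ 0 with φ(w'(t)) ≤ (℘₁/℘₀)·φ(η/T) + 2·Θ(T)·f_η·l_ξ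 for every t ∈ [0,T]; in particular 0 ≤ w' < ξ on [0,T]. -/

import Mathlib

open Set MeasureTheory Filter Topology intervalIntegral

noncomputable section

def clmp (lo hi x : ℝ) : ℝ := max lo (min x hi)
lemma clmp_mem {lo hi : ℝ} (h : lo ≤ hi) (x : ℝ) : clmp lo hi x ∈ Icc lo hi :=
  ⟨le_max_left _ _, max_le h (min_le_right _ _)⟩
lemma clmp_eq_self {lo hi x : ℝ} (hx : x ∈ Icc lo hi) : clmp lo hi x = x := by
  simp only [clmp]; rw [min_eq_left hx.2, max_eq_right hx.1]
lemma clmp_mono (lo hi : ℝ) : Monotone (clmp lo hi) := fun _ _ hxy =>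
  max_le_max le_rfl (min_le_min hxy le_rfl)
lemma clmp_continuous (lo hi : ℝ) : Continuous (clmp lo hi) :=
  continuous_const.max (continuous_id.min continuous_const)
lemma clmp_le_of {T x m : ℝ} (h0 : 0 ≤ m) (hx : x ≤ m) : clmp 0 T x ≤ m :=
  max_le h0 ((min_le_left _ _).trans hx)

lemma clmp_dist (lo hi x y : ℝ) : |clmp lo hi x - clmp lo hi y| ≤ |x - y| := by
  have h1 : |max lo (min x hi) - max lo (min y hi)| ≤ |min x hi - min y hi| := by
    rw [max_comm lo _, max_comm lo _]
    exact abs_max_sub_max_le_abs _ _ _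
  refine h1.trans ((abs_min_sub_min_le_max _ _ _ _).trans ?_)
  simp

lemma clmp_idem (lo hi x : ℝ) (h : lo ≤ hi) : clmp lo hi (clmp lo hi x) = clmp lo hi x :=
  clmp_eq_self (clmp_mem h x)

/-- Construction of a continuous monotone "inverse" of φ on `[0, φ ξ]`. -/
lemma exists_Psi (φ : ℝ → ℝ) (hφc : ContinuousOn φ (Ici 0)) (hφ0 : φ 0 = 0)
    (hφpos : ∀ t : ℝ, 0 < t → 0 < φ t) (hφmono : StrictMonoOn φ (Ioi 0))
    (ξ : ℝ) (hξ : 0 < ξ) :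
    ∃ Ψ : ℝ → ℝ, Continuous Ψ ∧ Monotone Ψ ∧ (∀ x, Ψ x ∈ Icc 0 ξ) ∧
      (∀ x ∈ Icc 0 (φ ξ), φ (Ψ x) = x) ∧ (∀ y ∈ Icc 0 ξ, Ψ (φ y) = y) ∧
      (∀ x ≤ 0, Ψ x = 0) := by
  set A := φ ξ with hA
  have hA0 : 0 < A := hφpos ξ hξ
  -- φ is strictly monotone on [0, ξ]
  have hφsm : StrictMonoOn φ (Icc 0 ξ) := by
    intro x hx y hy hxy
    rcases eq_or_lt_of_le hx.1 with h0 | h0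
    · rw [← h0, hφ0]; exact hφpos y (by rw [← h0] at hxy; exact hxy)
    · exact hφmono h0 (h0.trans hxy) hxy
  have hφmono' : MonotoneOn φ (Icc 0 ξ) := hφsm.monotoneOn
  have hφinj : InjOn φ (Icc 0 ξ) := hφsm.injOn
  -- surjectivity onto [0, A]
  have hsurj : ∀ x ∈ Icc 0 A, ∃ y ∈ Icc 0 ξ, φ y = x := by
    intro x hx
    have := intermediate_value_Icc hξ.le (hφc.mono (fun z hz => hz.1))
    rw [hφ0, ← hA] at this
    obtain ⟨y, hy, hyx⟩ := this hx
    exact ⟨y, hy, hyx⟩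
  classical
  set ψ : ℝ → ℝ := fun x => if hx : x ∈ Icc 0 A then (hsurj x hx).choose else 0 with hψ
  have hψspec : ∀ x ∈ Icc 0 A, ψ x ∈ Icc 0 ξ ∧ φ (ψ x) = x := by
    intro x hx
    simp only [hψ, dif_pos hx]
    exact ⟨(hsurj x hx).choose_spec.1, (hsurj x hx).choose_spec.2⟩
  have hψφ : ∀ y ∈ Icc 0 ξ, ψ (φ y) = y := by
    intro y hy
    have hmem : φ y ∈ Icc 0 A := ⟨by rw [← hφ0]; exact hφmono' (left_mem_Icc.2 hξ.le) hy hy.1,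
      hφmono' hy (right_mem_Icc.2 hξ.le) hy.2⟩
    exact hφinj (hψspec _ hmem).1 hy (hψspec _ hmem).2
  have hψ0 : ψ 0 = 0 := by
    have := hψφ 0 (left_mem_Icc.2 hξ.le); rwa [hφ0] at this
  have hψA : ψ A = ξ := hψφ ξ (right_mem_Icc.2 hξ.le)
  have hψmono : MonotoneOn ψ (Icc 0 A) := by
    intro x hx y hy hxy
    have h1 := hψspec x hx; have h2 := hψspec y hy
    by_contra h
    push_neg at h
    have := hφsm h2.1 h1.1 h
    rw [h1.2, h2.2] at this
    exact absurd hxy (not_le.2 this)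
  -- extend to a monotone surjection on ℝ
  set ψh : ℝ → ℝ := fun x => if x < 0 then x else if x ≤ A then ψ x else ξ + (x - A) with hψh
  have hψh_eq : ∀ x ∈ Icc 0 A, ψh x = ψ x := by
    intro x hx
    simp only [hψh, if_neg (not_lt.2 hx.1), if_pos hx.2]
  have hψhmono : Monotone ψh := by
    intro x y hxy
    simp only [hψh]
    rcases lt_or_ge x 0 with hx | hx
    · rw [if_pos hx]
      rcases lt_or_ge y 0 with hy | hy
      · rw [if_pos hy]; exact hxy
      · rw [if_neg (not_lt.2 hy)]
        rcases le_or_gt y A with hyA | hyA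
        · rw [if_pos hyA]; exact (hx.le.trans (hψspec y ⟨hy, hyA⟩).1.1)
        · rw [if_neg (not_le.2 hyA)]; nlinarith
    · rw [if_neg (not_lt.2 hx), if_neg (not_lt.2 (hx.trans hxy))]
      rcases le_or_gt x A with hxA | hxA
      · rw [if_pos hxA]
        rcases le_or_gt y A with hyA | hyA
        · rw [if_pos hyA]; exact hψmono ⟨hx, hxA⟩ ⟨hx.trans hxy, hyA⟩ hxy
        · rw [if_neg (not_le.2 hyA)]
          have := (hψspec x ⟨hx, hxA⟩).1.2; nlinarith
      · rw [if_neg (not_le.2 hxA), if_neg (not_le.2 (hxA.trans_le hxy))]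
        linarith
  have hψhsurj : Function.Surjective ψh := by
    intro y
    rcases lt_or_ge y 0 with hy | hy
    · exact ⟨y, by simp [hψh, if_pos hy]⟩
    · rcases le_or_gt y ξ with hyξ | hyξ
      · refine ⟨φ y, ?_⟩
        have hmem : φ y ∈ Icc 0 A := ⟨by rw [← hφ0]; exact hφmono' (left_mem_Icc.2 hξ.le) ⟨hy, hyξ⟩ hy,
          hφmono' ⟨hy, hyξ⟩ (right_mem_Icc.2 hξ.le) hyξ⟩
        rw [hψh_eq _ hmem]
        exact hψφ y ⟨hy, hyξ⟩
      · refine ⟨A + (y - ξ), ?_⟩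
        have h1 : ¬ (A + (y - ξ) < 0) := by push_neg; nlinarith
        have h2 : ¬ (A + (y - ξ) ≤ A) := by push_neg; nlinarith
        simp only [hψh, if_neg h1, if_neg h2]; ring
  have hψhcont : Continuous ψh := Monotone.continuous_of_surjective hψhmono hψhsurj
  refine ⟨fun x => ψh (clmp 0 A x), hψhcont.comp (clmp_continuous 0 A),
    hψhmono.comp (clmp_mono 0 A), ?_, ?_, ?_, ?_⟩
  · intro x
    show ψh (clmp 0 A x) ∈ Icc 0 ξ
    rw [hψh_eq _ (clmp_mem hA0.le x)]
    exact (hψspec _ (clmp_mem hA0.le x)).1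
  · intro x hx
    show φ (ψh (clmp 0 A x)) = x
    rw [clmp_eq_self hx, hψh_eq _ hx]
    exact (hψspec _ hx).2
  · intro y hy
    have hmem : φ y ∈ Icc 0 A := ⟨by rw [← hφ0]; exact hφmono' (left_mem_Icc.2 hξ.le) hy hy.1,
      hφmono' hy (right_mem_Icc.2 hξ.le) hy.2⟩
    show ψh (clmp 0 A (φ y)) = y
    rw [clmp_eq_self hmem, hψh_eq _ hmem]
    exact hψφ y hy
  · intro x hx
    have : clmp 0 A x = 0 := by
      simp only [clmp]
      rw [max_eq_left]
      exact (min_le_left _ _).trans hx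
    show ψh (clmp 0 A x) = 0
    rw [this, hψh_eq 0 (left_mem_Icc.2 hA0.le), hψ0]

/-- the integrand of the delayed integral operator -/
def igd (K f l : ℝ → ℝ) (η ξ T d : ℝ) (u : ℝ → ℝ → ℝ) (c s : ℝ) : ℝ :=
  K s * f (clmp 0 η (∫ r in (0:ℝ)..(clmp 0 T (s - d)), u c r))
    * l (clmp 0 ξ (u c (clmp 0 T (s - d))))

/-- one step of the delayed Picard-type operator -/
def stp (Ψ P K f l : ℝ → ℝ) (η ξ T d : ℝ) (u : ℝ → ℝ → ℝ) (c t : ℝ) : ℝ :=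
  Ψ ((c + ∫ s in (0:ℝ)..(clmp 0 T t), igd K f l η ξ T d u c s) / P (clmp 0 T t))

/-- the Tonelli-delay iteration -/
def itr (Ψ P K f l : ℝ → ℝ) (η ξ T d : ℝ) : ℕ → ℝ → ℝ → ℝ
  | 0 => fun _ _ => 0
  | (k+1) => stp Ψ P K f l η ξ T d (itr Ψ P K f l η ξ T d k)

section scheme

variable {Ψ P K f l : ℝ → ℝ} {η ξ T d : ℝ}

lemma igd_cont (hKc : Continuous K) (hfc : Continuous f)
    (hlξ : Continuous fun x => l (clmp 0 ξ x)) {u : ℝ → ℝ → ℝ}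
    (hu : Continuous fun q : ℝ × ℝ => u q.1 q.2) :
    Continuous fun q : ℝ × ℝ => igd K f l η ξ T d u q.1 q.2 := by
  have hJ : Continuous fun q : ℝ × ℝ => ∫ r in (0:ℝ)..(clmp 0 T (q.2 - d)), u q.1 r := by
    apply continuous_parametric_intervalIntegral_of_continuous (f := fun (q : ℝ × ℝ) r => u q.1 r)
    · exact hu.comp ((continuous_fst.comp continuous_fst).prodMk continuous_snd)
    · exact (clmp_continuous 0 T).comp (continuous_snd.sub continuous_const)
  unfold igd
  refine Continuous.mul (Continuous.mul (hKc.comp continuous_snd) ?_) ?_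
  · exact hfc.comp ((clmp_continuous 0 η).comp hJ)
  · exact hlξ.comp (hu.comp (continuous_fst.prodMk
      ((clmp_continuous 0 T).comp (continuous_snd.sub continuous_const))))

lemma stp_cont (hΨc : Continuous Ψ) (hKc : Continuous K) (hfc : Continuous f)
    (hlξ : Continuous fun x => l (clmp 0 ξ x))
    (hPc : Continuous fun t => P (clmp 0 T t))
    (hPne : ∀ t : ℝ, P (clmp 0 T t) ≠ 0) {u : ℝ → ℝ → ℝ}
    (hu : Continuous fun q : ℝ × ℝ => u q.1 q.2) :
    Continuous fun q : ℝ × ℝ => stp Ψ P K f l η ξ T d u q.1 q.2 := by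
  have hI : Continuous fun q : ℝ × ℝ =>
      ∫ s in (0:ℝ)..(clmp 0 T q.2), igd K f l η ξ T d u q.1 s := by
    apply continuous_parametric_intervalIntegral_of_continuous
      (f := fun (q : ℝ × ℝ) s => igd K f l η ξ T d u q.1 s)
    · exact (igd_cont hKc hfc hlξ hu).comp
        ((continuous_fst.comp continuous_fst).prodMk continuous_snd)
    · exact (clmp_continuous 0 T).comp continuous_snd
  unfold stp
  exact hΨc.comp ((continuous_fst.add hI).div (hPc.comp continuous_snd) fun q => hPne q.2)

lemma itr_cont (hΨc : Continuous Ψ) (hKc : Continuous K) (hfc : Continuous f)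
    (hlξ : Continuous fun x => l (clmp 0 ξ x))
    (hPc : Continuous fun t => P (clmp 0 T t))
    (hPne : ∀ t : ℝ, P (clmp 0 T t) ≠ 0) (k : ℕ) :
    Continuous fun q : ℝ × ℝ => itr Ψ P K f l η ξ T d k q.1 q.2 := by
  induction k with
  | zero => exact continuous_const
  | succ k ih => exact stp_cont hΨc hKc hfc hlξ hPc hPne ih

end scheme

section scheme2

variable {Ψ P K f l : ℝ → ℝ} {η ξ T d : ℝ}

lemma itr_mem (hΨmem : ∀ x, Ψ x ∈ Icc 0 ξ) (hξ0 : 0 ≤ ξ) (k : ℕ) (c t : ℝ) :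
    itr Ψ P K f l η ξ T d k c t ∈ Icc 0 ξ := by
  cases k with
  | zero => exact ⟨le_rfl, hξ0⟩
  | succ k => exact hΨmem _

lemma stp_zero_len {u₁ u₂ : ℝ → ℝ → ℝ} {c t : ℝ} (h : clmp 0 T t = 0) :
    stp Ψ P K f l η ξ T d u₁ c t = stp Ψ P K f l η ξ T d u₂ c t := by
  unfold stp
  rw [h, intervalIntegral.integral_same, intervalIntegral.integral_same]

lemma stp_local {u₁ u₂ : ℝ → ℝ → ℝ} {c m : ℝ} (hT : 0 ≤ T) (h0m : 0 ≤ m)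
    (h : ∀ r ∈ Icc (0:ℝ) T, r ≤ m → u₁ c r = u₂ c r) (t : ℝ)
    (ht : clmp 0 T t ≤ m + d) :
    stp Ψ P K f l η ξ T d u₁ c t = stp Ψ P K f l η ξ T d u₂ c t := by
  unfold stp
  congr 3
  apply intervalIntegral.integral_congr
  intro s hs
  rw [uIcc_of_le (clmp_mem hT t).1] at hs
  have hsd : clmp 0 T (s - d) ≤ m := clmp_le_of h0m (by
    have := hs.2.trans ht; linarith)
  have hsd' : clmp 0 T (s - d) ∈ Icc (0:ℝ) T := clmp_mem hT _
  unfold igd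
  rw [h _ hsd' hsd]
  congr 4
  apply intervalIntegral.integral_congr
  intro r hr
  rw [uIcc_of_le hsd'.1] at hr
  exact h r ⟨hr.1, hr.2.trans hsd'.2⟩ (hr.2.trans hsd)

lemma itr_stable (hT : 0 ≤ T) (hd : 0 < d) (k : ℕ) (c t : ℝ)
    (ht : clmp 0 T t ≤ k * d) :
    itr Ψ P K f l η ξ T d (k+1) c t = itr Ψ P K f l η ξ T d (k+2) c t := by
  induction k generalizing t with
  | zero =>
    have h0 : clmp 0 T t = 0 := le_antisymm (by simpa using ht) (clmp_mem hT t).1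
    show stp Ψ P K f l η ξ T d _ c t = stp Ψ P K f l η ξ T d _ c t
    exact stp_zero_len h0
  | succ k ih =>
    show stp Ψ P K f l η ξ T d (itr Ψ P K f l η ξ T d (k+1)) c t
      = stp Ψ P K f l η ξ T d (itr Ψ P K f l η ξ T d (k+2)) c t
    refine stp_local hT (by positivity : (0:ℝ) ≤ k * d) ?_ t ?_
    · intro r hr hrm
      apply ih
      rwa [clmp_eq_self hr]
    · push_cast at ht ⊢
      linarith

lemma itr_neg (hΨneg : ∀ x ≤ 0, Ψ x = 0) (hPpos : ∀ t : ℝ, 0 < P (clmp 0 T t))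
    (hzero : ∀ s : ℝ, K s * f (clmp 0 η 0) * l (clmp 0 ξ 0) = 0)
    {c : ℝ} (hc : c < 0) (k : ℕ) (t : ℝ) :
    itr Ψ P K f l η ξ T d k c t = 0 := by
  induction k generalizing t with
  | zero => rfl
  | succ k ih =>
    show stp Ψ P K f l η ξ T d (itr Ψ P K f l η ξ T d k) c t = 0
    unfold stp
    have hig : ∀ s : ℝ, igd K f l η ξ T d (itr Ψ P K f l η ξ T d k) c s = 0 := by
      intro s
      unfold igd
      have h1 : (∫ r in (0:ℝ)..(clmp 0 T (s - d)), itr Ψ P K f l η ξ T d k c r) = 0 := by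
        simp [ih]
      rw [h1, ih]
      exact hzero s
    have h2 : (∫ s in (0:ℝ)..(clmp 0 T t), igd K f l η ξ T d (itr Ψ P K f l η ξ T d k) c s) = 0 := by
      simp [hig]
    rw [h2, add_zero]
    exact hΨneg _ (le_of_lt (div_neg_of_neg_of_pos hc (hPpos t)))

end scheme2

section helpers

lemma tendsto_of_eventually_abs {ι : Type*} {F : Filter ι} {x : ι → ℝ} {y : ℝ}
    (h : ∀ ε > (0:ℝ), ∀ᶠ i in F, |x i - y| ≤ ε) : Filter.Tendsto x F (𝓝 y) := by
  rw [Metric.tendsto_nhds]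
  intro ε hε
  filter_upwards [h (ε/2) (by linarith)] with i hi
  rw [Real.dist_eq]
  linarith

lemma cont_primitive_hasDerivAt {v : ℝ → ℝ} (hv : Continuous v) (t : ℝ) :
    HasDerivAt (fun x => ∫ s in (0:ℝ)..x, v s) (v t) t :=
  intervalIntegral.integral_hasDerivAt_right (hv.intervalIntegrable _ _)
    (hv.stronglyMeasurable.stronglyMeasurableAtFilter) hv.continuousAt

lemma primitive_dist {v : ℝ → ℝ} (hv : Continuous v) {C : ℝ}
    (hC : ∀ s, |v s| ≤ C) (x y : ℝ) :
    |(∫ s in (0:ℝ)..x, v s) - ∫ s in (0:ℝ)..y, v s| ≤ C * |x - y| := by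
  rw [intervalIntegral.integral_interval_sub_left (hv.intervalIntegrable _ _)
    (hv.intervalIntegrable _ _)]
  have := intervalIntegral.norm_integral_le_of_norm_le_const
    (C := C) (f := v) (a := y) (b := x) (fun s _ => hC s)
  simpa [Real.norm_eq_abs] using this

lemma unif_of_lip {ι : Type*} {F : Filter ι} {Gn : ι → ℝ → ℝ} {G : ℝ → ℝ} {M T : ℝ}
    (hT : 0 < T) (hM : 0 ≤ M)
    (hlip : ∀ i x y, |Gn i x - Gn i y| ≤ M * |x - y|)
    (hlipG : ∀ x y, |G x - G y| ≤ M * |x - y|)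
    (hpt : ∀ t ∈ Icc (0:ℝ) T, Filter.Tendsto (fun i => Gn i t) F (𝓝 (G t)))
    {ε : ℝ} (hε : 0 < ε) :
    ∀ᶠ i in F, ∀ t ∈ Icc (0:ℝ) T, |Gn i t - G t| ≤ ε := by
  obtain ⟨N, hN⟩ := exists_nat_gt (3 * M * T / ε)
  set δ : ℝ := T / (N + 1) with hδdef
  have hN1 : (0:ℝ) < (N:ℝ) + 1 := by positivity
  have hδpos : 0 < δ := by positivity
  have hMδ : M * δ ≤ ε / 3 := by
    rw [hδdef, ← mul_div_assoc, div_le_iff₀ hN1]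
    rw [div_lt_iff₀ hε] at hN
    nlinarith
  have hgrid : ∀ᶠ i in F, ∀ j ∈ Finset.range (N + 2), |Gn i (j * δ) - G (j * δ)| ≤ ε / 3 := by
    rw [Filter.eventually_all_finset]
    intro j hj
    have hjT : (j:ℝ) * δ ∈ Icc (0:ℝ) T := by
      constructor
      · positivity
      · have hjN : (j:ℝ) ≤ (N:ℝ) + 1 := by
          have := Finset.mem_range.1 hj
          exact_mod_cast Nat.lt_succ_iff.1 this
        calc (j:ℝ) * δ ≤ ((N:ℝ)+1) * δ := by
              apply mul_le_mul_of_nonneg_right hjN hδpos.le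
          _ = T := by rw [hδdef]; field_simp
    have := (hpt _ hjT)
    rw [Metric.tendsto_nhds] at this
    filter_upwards [this (ε/3) (by linarith)] with i hi
    rw [Real.dist_eq] at hi
    exact hi.le
  filter_upwards [hgrid] with i hi t ht
  set j : ℕ := ⌊t / δ⌋₊ with hjdef
  have htδ : 0 ≤ t / δ := div_nonneg ht.1 hδpos.le
  have hj1 : (j:ℝ) * δ ≤ t := by
    rw [hjdef]
    have := Nat.floor_le htδ
    calc (⌊t / δ⌋₊ : ℝ) * δ ≤ t / δ * δ := mul_le_mul_of_nonneg_right this hδpos.le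
      _ = t := by field_simp
  have hj2 : t < ((j:ℝ) + 1) * δ := by
    have := Nat.lt_floor_add_one (t / δ)
    calc t = t / δ * δ := by field_simp
      _ < ((j:ℝ) + 1) * δ := by
          apply mul_lt_mul_of_pos_right _ hδpos
          exact_mod_cast this
  have hjmem : j ∈ Finset.range (N + 2) := by
    rw [Finset.mem_range]
    by_contra hcon
    push_neg at hcon
    have : ((N:ℝ) + 2) ≤ (j:ℝ) := by exact_mod_cast hcon
    have h1 : ((N:ℝ) + 2) * δ ≤ (j:ℝ) * δ := mul_le_mul_of_nonneg_right this hδpos.le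
    have h2 : ((N:ℝ) + 1) * δ = T := by rw [hδdef]; field_simp
    nlinarith [ht.2]
  have hdist : |t - (j:ℝ) * δ| ≤ δ := by
    rw [abs_le]
    constructor <;> nlinarith
  have e1 := hlip i t ((j:ℝ) * δ)
  have e2 := hi j hjmem
  have e3 := hlipG ((j:ℝ) * δ) t
  have e4 : M * |t - (j:ℝ)*δ| ≤ ε/3 := by
    calc M * |t - (j:ℝ)*δ| ≤ M * δ := mul_le_mul_of_nonneg_left hdist hM
      _ ≤ ε/3 := hMδ
  have e5 : M * |(j:ℝ)*δ - t| ≤ ε/3 := by rwa [abs_sub_comm]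
  have habc : |Gn i t - G t| ≤ |Gn i t - Gn i ((j:ℝ)*δ)| + |Gn i ((j:ℝ)*δ) - G ((j:ℝ)*δ)|
      + |G ((j:ℝ)*δ) - G t| := by
    have := abs_sub_le (Gn i t) (Gn i ((j:ℝ)*δ)) (G t)
    have h2 := abs_sub_le (Gn i ((j:ℝ)*δ)) (G ((j:ℝ)*δ)) (G t)
    linarith
  have hfin : |Gn i t - Gn i ((j:ℝ)*δ)| + |Gn i ((j:ℝ)*δ) - G ((j:ℝ)*δ)|
      + |G ((j:ℝ)*δ) - G t| ≤ ε/3 + ε/3 + ε/3 := by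
    exact add_le_add (add_le_add (e1.trans e4) e2) (e3.trans e5)
  linarith

end helpers


end

open Set MeasureTheory

set_option maxHeartbeats 2000000

/-- Theorem 3.2: existence for the singular two-point Dirichlet problem
`[℘ φ(w')]' = ℘ a f(w) l(|w'|)` on `(0,T)`, `w(0)=0`, `w(T)=η`. -/
theorem stmt_1
    (T₀ : ℝ) (hT₀ : 0 < T₀)
    (φ : ℝ → ℝ) (hφc : ContinuousOn φ (Ici 0)) (hφ0 : φ 0 = 0)
    (hφpos : ∀ t : ℝ, 0 < t → 0 < φ t)
    (hφmono : StrictMonoOn φ (Ioi 0))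
    (η₀ : ℝ) (hη₀ : 0 < η₀)
    (f : ℝ → ℝ) (hfc : Continuous f)
    (hfnn : ∀ t ∈ Ioo (0:ℝ) η₀, 0 ≤ f t)
    (l : ℝ → ℝ) (hlc : ContinuousOn l (Ici 0))
    (hlnn : ∀ t ∈ Ici (0:ℝ), 0 ≤ l t)
    (hfl0 : f 0 * l 0 = 0)
    (p p' : ℝ → ℝ)
    (hpd : ∀ t ∈ Icc (0:ℝ) T₀, HasDerivWithinAt p (p' t) (Icc 0 T₀) t)
    (hp'c : ContinuousOn p' (Icc (0:ℝ) T₀))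
    (hppos : ∀ t ∈ Icc (0:ℝ) T₀, 0 < p t)
    (a : ℝ → ℝ) (hac : ContinuousOn a (Icc (0:ℝ) T₀))
    (hapos : ∀ t ∈ Icc (0:ℝ) T₀, 0 < a t)
    (ξ T η : ℝ) (hξ : 0 < ξ) (hT : T ∈ Ioo (0:ℝ) T₀) (hη : η ∈ Ioo (0:ℝ) η₀)
    (hsmall :
      sSup (p '' Icc (0:ℝ) T₀) / sInf (p '' Icc (0:ℝ) T₀) * φ (η / T) +
        2 * sSup ((fun t => (p t)⁻¹ * (∫ s in (0:ℝ)..t, p s * a s)) '' Icc (0:ℝ) T) *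
          sSup (f '' Icc (0:ℝ) η) * sSup (l '' Icc (0:ℝ) ξ) < φ ξ) :
    ∃ w w' : ℝ → ℝ,
      (∀ t ∈ Icc (0:ℝ) T, HasDerivWithinAt w (w' t) (Icc 0 T) t) ∧
      ContinuousOn w' (Icc (0:ℝ) T) ∧
      w 0 = 0 ∧ w T = η ∧
      (∀ t ∈ Icc (0:ℝ) T, 0 ≤ w t ∧ w t ≤ η) ∧
      (∀ t ∈ Ioo (0:ℝ) T,
        HasDerivAt (fun s => p s * φ (w' s)) (p t * a t * f (w t) * l |w' t|) t) ∧
      (∀ t ∈ Icc (0:ℝ) T, 0 ≤ w' t ∧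
        φ (w' t) ≤
          sSup (p '' Icc (0:ℝ) T₀) / sInf (p '' Icc (0:ℝ) T₀) * φ (η / T) +
            2 * sSup ((fun t => (p t)⁻¹ * (∫ s in (0:ℝ)..t, p s * a s)) '' Icc (0:ℝ) T) *
              sSup (f '' Icc (0:ℝ) η) * sSup (l '' Icc (0:ℝ) ξ)) ∧
      (∀ t ∈ Icc (0:ℝ) T, w' t < ξ) := by
  classical
  obtain ⟨hT1, hT2⟩ := hT
  obtain ⟨hη1, hη2⟩ := hη
  have hsub : Icc (0:ℝ) T ⊆ Icc (0:ℝ) T₀ := Icc_subset_Icc le_rfl hT2.le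
  have hpc : ContinuousOn p (Icc (0:ℝ) T₀) := fun t ht => (hpd t ht).continuousWithinAt
  -- sup/inf of p
  set p₀ : ℝ := sInf (p '' Icc (0:ℝ) T₀) with hp₀def
  set p₁ : ℝ := sSup (p '' Icc (0:ℝ) T₀) with hp₁def
  have himgp : IsCompact (p '' Icc (0:ℝ) T₀) := isCompact_Icc.image_of_continuousOn hpc
  have hnep : (p '' Icc (0:ℝ) T₀).Nonempty :=
    ⟨p 0, mem_image_of_mem _ ⟨le_rfl, hT₀.le⟩⟩
  have hp₀pos : 0 < p₀ := by
    obtain ⟨t₀, ht₀, hpt₀⟩ := himgp.sInf_mem hnep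
    rw [hp₀def, ← hpt₀]
    exact hppos t₀ ht₀
  have hp₀le : ∀ t ∈ Icc (0:ℝ) T₀, p₀ ≤ p t := fun t ht =>
    csInf_le himgp.bddBelow (mem_image_of_mem _ ht)
  have hp₁ge : ∀ t ∈ Icc (0:ℝ) T₀, p t ≤ p₁ := fun t ht =>
    le_csSup himgp.bddAbove (mem_image_of_mem _ ht)
  have hp₀₁ : p₀ ≤ p₁ := (hp₀le 0 ⟨le_rfl, hT₀.le⟩).trans (hp₁ge 0 ⟨le_rfl, hT₀.le⟩)
  have hp₁pos : 0 < p₁ := hp₀pos.trans_le hp₀₁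
  -- sup of a
  set amax : ℝ := sSup (a '' Icc (0:ℝ) T₀) with hamaxdef
  have himga : IsCompact (a '' Icc (0:ℝ) T₀) := isCompact_Icc.image_of_continuousOn hac
  have haub : ∀ t ∈ Icc (0:ℝ) T₀, a t ≤ amax := fun t ht =>
    le_csSup himga.bddAbove (mem_image_of_mem _ ht)
  have hamax0 : 0 ≤ amax := (hapos 0 ⟨le_rfl, hT₀.le⟩).le.trans (haub 0 ⟨le_rfl, hT₀.le⟩)
  -- sup of f on [0,η]
  set fη : ℝ := sSup (f '' Icc (0:ℝ) η) with hfηdef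
  have himgf : IsCompact (f '' Icc (0:ℝ) η) := isCompact_Icc.image_of_continuousOn hfc.continuousOn
  have hfub : ∀ x ∈ Icc (0:ℝ) η, f x ≤ fη := fun x hx =>
    le_csSup himgf.bddAbove (mem_image_of_mem _ hx)
  have hf0 : 0 ≤ f 0 := by
    have htd : Filter.Tendsto f (𝓝[>] (0:ℝ)) (𝓝 (f 0)) :=
      hfc.continuousAt.tendsto.mono_left nhdsWithin_le_nhds
    refine ge_of_tendsto htd ?_
    filter_upwards [Ioo_mem_nhdsGT_of_mem (Set.left_mem_Ico.2 hη₀)] with x hx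
    exact hfnn x hx
  have hfnn' : ∀ x ∈ Icc (0:ℝ) η, 0 ≤ f x := by
    intro x hx
    rcases eq_or_lt_of_le hx.1 with h | h
    · rw [← h]; exact hf0
    · exact hfnn x ⟨h, lt_of_le_of_lt hx.2 hη2⟩
  have hfη0 : 0 ≤ fη := (hfnn' 0 ⟨le_rfl, hη1.le⟩).trans (hfub 0 ⟨le_rfl, hη1.le⟩)
  -- sup of l on [0,ξ]
  set lξ : ℝ := sSup (l '' Icc (0:ℝ) ξ) with hlξdef
  have himgl : IsCompact (l '' Icc (0:ℝ) ξ) :=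
    isCompact_Icc.image_of_continuousOn (hlc.mono (fun x hx => hx.1))
  have hlub : ∀ x ∈ Icc (0:ℝ) ξ, l x ≤ lξ := fun x hx =>
    le_csSup himgl.bddAbove (mem_image_of_mem _ hx)
  have hlξ0 : 0 ≤ lξ := (hlnn 0 (mem_Ici.2 le_rfl)).trans (hlub 0 ⟨le_rfl, hξ.le⟩)
  -- the kernel K
  set K : ℝ → ℝ := fun s => p (clmp 0 T s) * a (clmp 0 T s) with hKdef
  have hclm : ∀ x : ℝ, clmp 0 T x ∈ Icc (0:ℝ) T₀ := fun x => hsub (clmp_mem hT1.le x)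
  have hKc : Continuous K := by
    refine Continuous.mul ?_ ?_
    · exact hpc.comp_continuous (clmp_continuous 0 T) hclm
    · exact hac.comp_continuous (clmp_continuous 0 T) hclm
  set Kmax : ℝ := p₁ * amax with hKmaxdef
  have hKpos : ∀ s, 0 < K s := fun s =>
    mul_pos (hppos _ (hclm s)) (hapos _ (hclm s))
  have hKub : ∀ s, K s ≤ Kmax := fun s =>
    mul_le_mul (hp₁ge _ (hclm s)) (haub _ (hclm s)) (hapos _ (hclm s)).le hp₁pos.le
  have hKmax0 : 0 < Kmax := (hKpos 0).trans_le (hKub 0)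
  -- Θ
  set Θ : ℝ := sSup ((fun t => (p t)⁻¹ * (∫ s in (0:ℝ)..t, p s * a s)) '' Icc (0:ℝ) T)
    with hΘdef
  have hPc : Continuous fun t => p (clmp 0 T t) := hpc.comp_continuous (clmp_continuous 0 T) hclm
  have hPpos : ∀ t : ℝ, 0 < p (clmp 0 T t) := fun t => hppos _ (hclm t)
  have hKprim : Continuous fun t : ℝ => ∫ s in (0:ℝ)..t, K s :=
    intervalIntegral.continuous_primitive (fun a b => hKc.intervalIntegrable a b) 0
  have hintKpa : ∀ t ∈ Icc (0:ℝ) T, (∫ s in (0:ℝ)..t, p s * a s) = ∫ s in (0:ℝ)..t, K s := by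
    intro t ht
    apply intervalIntegral.integral_congr
    intro s hs
    rw [uIcc_of_le ht.1] at hs
    rw [hKdef]
    simp only []
    rw [clmp_eq_self ⟨hs.1, hs.2.trans ht.2⟩]
  have hθeq : EqOn (fun t => (p t)⁻¹ * (∫ s in (0:ℝ)..t, p s * a s))
      (fun t => (p (clmp 0 T t))⁻¹ * (∫ s in (0:ℝ)..t, K s)) (Icc (0:ℝ) T) := by
    intro t ht
    simp only []
    rw [hintKpa t ht, clmp_eq_self ht]
  have hθcont : ContinuousOn (fun t => (p (clmp 0 T t))⁻¹ * (∫ s in (0:ℝ)..t, K s))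
      (Icc (0:ℝ) T) :=
    ((hPc.inv₀ (fun t => (hPpos t).ne')).mul hKprim).continuousOn
  have himgθ : IsCompact ((fun t => (p t)⁻¹ * (∫ s in (0:ℝ)..t, p s * a s)) '' Icc (0:ℝ) T) := by
    rw [image_congr hθeq]
    exact isCompact_Icc.image_of_continuousOn hθcont
  have hθub : ∀ t ∈ Icc (0:ℝ) T, (p t)⁻¹ * (∫ s in (0:ℝ)..t, p s * a s) ≤ Θ := fun t ht =>
    le_csSup himgθ.bddAbove (mem_image_of_mem _ ht)
  have hΘ0 : 0 ≤ Θ := by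
    have h0 : (p (0:ℝ))⁻¹ * (∫ s in (0:ℝ)..(0:ℝ), p s * a s) = 0 := by
      rw [intervalIntegral.integral_same, mul_zero]
    have := hθub 0 ⟨le_rfl, hT1.le⟩
    rwa [h0] at this

  -- the bound B and consequences of hsmall
  set B : ℝ := p₁ / p₀ * φ (η / T) + 2 * Θ * fη * lξ with hBdef
  have hφηT : 0 < φ (η / T) := hφpos _ (div_pos hη1 hT1)
  have hΘfl0 : 0 ≤ 2 * Θ * fη * lξ := by positivity
  have hφm : MonotoneOn φ (Ici (0:ℝ)) := by
    intro x hx y hy hxy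
    rcases eq_or_lt_of_le (mem_Ici.1 hx) with h | h
    · rw [← h, hφ0]
      rcases eq_or_lt_of_le ((mem_Ici.1 hx).trans hxy) with h2 | h2
      · rw [← h2, hφ0]
      · exact (hφpos y h2).le
    · exact (hφmono.monotoneOn h (h.trans_le hxy)) hxy
  have hp₁p₀1 : (1:ℝ) ≤ p₁ / p₀ := (one_le_div hp₀pos).2 hp₀₁
  have hφB : φ (η / T) ≤ B := by
    rw [hBdef]
    nlinarith [mul_le_mul_of_nonneg_right hp₁p₀1 hφηT.le]
  have hηTξ : η / T < ξ := by
    by_contra hcon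
    push_neg at hcon
    have h1 : φ ξ ≤ φ (η / T) := hφm (mem_Ici.2 hξ.le)
      (mem_Ici.2 (div_nonneg hη1.le hT1.le)) hcon
    have h2 : B < φ ξ := hsmall
    exact lt_irrefl _ (h1.trans_lt (hφB.trans_lt h2))
  have hηTmem : η / T ∈ Icc (0:ℝ) ξ := ⟨div_nonneg hη1.le hT1.le, hηTξ.le⟩
  -- Ψ
  obtain ⟨Ψ, hΨc, hΨm, hΨmem, hΨr, hΨl, hΨ0⟩ := exists_Psi φ hφc hφ0 hφpos hφmono ξ hξ
  -- parameters for the scheme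
  have hlξc : Continuous fun x => l (clmp 0 ξ x) :=
    hlc.comp_continuous (clmp_continuous 0 ξ) (fun x => (clmp_mem hξ.le x).1)
  have hPne : ∀ t : ℝ, p (clmp 0 T t) ≠ 0 := fun t => (hPpos t).ne'
  set cstar : ℝ := p₁ * φ (η / T) with hcstardef
  have hcstarpos : 0 < cstar := mul_pos hp₁pos hφηT
  set M : ℝ := Kmax * (fη * lξ) with hMdef
  have hM0 : 0 ≤ M := by positivity
  -- global bounds on the integrand igd
  have higd_bound : ∀ (dd : ℝ) (u : ℝ → ℝ → ℝ) (c s : ℝ),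
      0 ≤ igd K f l η ξ T dd u c s ∧ igd K f l η ξ T dd u c s ≤ M := by
    intro dd u c s
    unfold igd
    have h1 := hfnn' _ (clmp_mem hη1.le (∫ r in (0:ℝ)..(clmp 0 T (s - dd)), u c r))
    have h1' := hfub _ (clmp_mem hη1.le (∫ r in (0:ℝ)..(clmp 0 T (s - dd)), u c r))
    have h2 := hlnn _ (mem_Ici.2 (clmp_mem hξ.le (u c (clmp 0 T (s - dd)))).1)
    have h2' := hlub _ (clmp_mem hξ.le (u c (clmp 0 T (s - dd))))
    have h3 := (hKpos s).le
    have h4 := hKub s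
    constructor
    · apply mul_nonneg (mul_nonneg h3 h1) h2
    · rw [hMdef]
      calc K s * f (clmp 0 η (∫ r in (0:ℝ)..(clmp 0 T (s - dd)), u c r))
            * l (clmp 0 ξ (u c (clmp 0 T (s - dd))))
          ≤ Kmax * fη * lξ := by
            apply mul_le_mul _ h2' h2 (by positivity)
            exact mul_le_mul h4 h1' h1 hKmax0.le
        _ = Kmax * (fη * lξ) := by ring

  have hzeroK : ∀ s : ℝ, K s * f (clmp 0 η 0) * l (clmp 0 ξ 0) = 0 := by
    intro s
    rw [clmp_eq_self (left_mem_Icc.2 hη1.le), clmp_eq_self (left_mem_Icc.2 hξ.le),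
      mul_assoc, hfl0, mul_zero]
  have hchoice : ∀ n : ℕ, ∃ c : ℝ, c ∈ Icc (0:ℝ) cstar ∧
      (∫ s in (0:ℝ)..T, itr Ψ p K f l η ξ T (T/(n+1)) (n+2) c s) = η := by
    intro n
    set dd : ℝ := T/(n+1) with hdd
    have hitrc : Continuous fun q : ℝ × ℝ => itr Ψ p K f l η ξ T dd (n+2) q.1 q.2 :=
      itr_cont hΨc hKc hfc hlξc hPc hPne _
    set E : ℝ → ℝ := fun c => ∫ s in (0:ℝ)..T, itr Ψ p K f l η ξ T dd (n+2) c s with hE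
    have hEcont : Continuous E := by
      apply intervalIntegral.continuous_parametric_intervalIntegral_of_continuous'
        (f := fun c s => itr Ψ p K f l η ξ T dd (n+2) c s)
      exact hitrc
    have hEneg : E (-1) = 0 := by
      have hz : ∀ s : ℝ, itr Ψ p K f l η ξ T dd (n+2) (-1) s = 0 :=
        itr_neg hΨ0 hPpos hzeroK (by norm_num) _
      rw [hE]
      simp only [hz]
      simp
    have hptw : ∀ s ∈ Icc (0:ℝ) T, η/T ≤ itr Ψ p K f l η ξ T dd (n+2) cstar s := by
      intro s _
      show η/T ≤ stp Ψ p K f l η ξ T dd (itr Ψ p K f l η ξ T dd (n+1)) cstar s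
      unfold stp
      set I : ℝ := ∫ s' in (0:ℝ)..(clmp 0 T s),
        igd K f l η ξ T dd (itr Ψ p K f l η ξ T dd (n+1)) cstar s' with hI
      have hI0 : 0 ≤ I := intervalIntegral.integral_nonneg (clmp_mem hT1.le s).1
        (fun u _ => (higd_bound dd _ cstar u).1)
      have harg : φ (η/T) ≤ (cstar + I)/p (clmp 0 T s) := by
        have h1 : cstar / p₁ ≤ cstar / p (clmp 0 T s) :=
          div_le_div_of_nonneg_left hcstarpos.le (hPpos s) (hp₁ge _ (hclm s))
        have h2 : cstar / p₁ = φ (η/T) := by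
          rw [hcstardef]; field_simp
        have h3 : cstar / p (clmp 0 T s) ≤ (cstar + I)/p (clmp 0 T s) :=
          (div_le_div_iff_of_pos_right (hPpos s)).2 (by linarith)
        linarith
      calc η/T = Ψ (φ (η/T)) := (hΨl _ hηTmem).symm
        _ ≤ Ψ ((cstar + I)/p (clmp 0 T s)) := hΨm harg
    have hEcstar : η ≤ E cstar := by
      have hint : Continuous fun s => itr Ψ p K f l η ξ T dd (n+2) cstar s :=
        hitrc.comp (continuous_const.prodMk continuous_id)
      have hcst : (∫ s in (0:ℝ)..T, η/T) = η := by
        rw [intervalIntegral.integral_const, smul_eq_mul]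
        field_simp
        ring
      calc η = ∫ s in (0:ℝ)..T, η/T := hcst.symm
        _ ≤ E cstar := intervalIntegral.integral_mono_on hT1.le intervalIntegrable_const
            (hint.intervalIntegrable _ _) hptw
    have hm1 : (-1:ℝ) ≤ cstar := by linarith
    obtain ⟨c, hcmem, hcE⟩ := intermediate_value_Icc hm1 hEcont.continuousOn
      (by rw [hEneg]; exact ⟨hη1.le, hEcstar⟩)
    refine ⟨c, ⟨?_, hcmem.2⟩, hcE⟩
    by_contra hc
    push_neg at hc
    have hz : ∀ s : ℝ, itr Ψ p K f l η ξ T dd (n+2) c s = 0 :=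
      itr_neg hΨ0 hPpos hzeroK hc _
    have hEc0 : E c = 0 := by
      rw [hE]; simp only [hz]; simp
    rw [hEc0] at hcE
    exact absurd hcE.symm hη1.ne'

  -- the sequence of approximate solutions
  set dn : ℕ → ℝ := fun n => T/(n+1) with hdndef
  have hdnpos : ∀ n : ℕ, 0 < dn n := fun n => by rw [hdndef]; positivity
  set cn : ℕ → ℝ := fun n => (hchoice n).choose with hcndef
  have hcn : ∀ n, cn n ∈ Icc (0:ℝ) cstar ∧
      (∫ s in (0:ℝ)..T, itr Ψ p K f l η ξ T (dn n) (n+2) (cn n) s) = η :=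
    fun n => (hchoice n).choose_spec
  set vfull : ℕ → ℝ → ℝ → ℝ := fun n => itr Ψ p K f l η ξ T (dn n) (n+2) with hvfulldef
  set vn : ℕ → ℝ → ℝ := fun n t => vfull n (cn n) t with hvndef
  set Fn : ℕ → ℝ → ℝ := fun n s => igd K f l η ξ T (dn n) (vfull n) (cn n) s with hFndef
  set Gn : ℕ → ℝ → ℝ := fun n t => ∫ s in (0:ℝ)..(clmp 0 T t), Fn n s with hGndef
  have hstable : ∀ n (c t : ℝ), vfull n c t = stp Ψ p K f l η ξ T (dn n) (vfull n) c t := by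
    intro n c t
    have ht : clmp 0 T t ≤ ((n:ℕ)+1 : ℕ) * dn n := by
      have : (((n:ℕ)+1 : ℕ) : ℝ) * dn n = T := by
        rw [hdndef]
        push_cast
        field_simp
      rw [this]
      exact (clmp_mem hT1.le t).2
    exact itr_stable hT1.le (hdnpos n) (n+1) c t ht
  have hvfix : ∀ n t, vn n t = Ψ ((cn n + Gn n t)/p (clmp 0 T t)) := by
    intro n t
    rw [hvndef]
    simp only []
    rw [hstable n (cn n) t]
    rfl
  have hvnmem : ∀ n t, vn n t ∈ Icc (0:ℝ) ξ := fun n t => itr_mem hΨmem hξ.le _ _ _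
  have hvncont : ∀ n, Continuous (vn n) := by
    intro n
    show Continuous fun t : ℝ => itr Ψ p K f l η ξ T (dn n) (n+2) (cn n) t
    exact (itr_cont hΨc hKc hfc hlξc hPc hPne (n+2)).comp
      (continuous_const.prodMk continuous_id)
  have hFncont : ∀ n, Continuous (Fn n) := by
    intro n
    show Continuous fun s : ℝ => igd K f l η ξ T (dn n) (vfull n) (cn n) s
    exact (igd_cont hKc hfc hlξc (itr_cont hΨc hKc hfc hlξc hPc hPne (n+2))).comp
      (continuous_const.prodMk continuous_id)
  have hFnb : ∀ n s, 0 ≤ Fn n s ∧ Fn n s ≤ M := fun n s => higd_bound _ _ _ _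
  have hFnabs : ∀ n s, |Fn n s| ≤ M := fun n s =>
    abs_le.2 ⟨by linarith [(hFnb n s).1], (hFnb n s).2⟩
  have hGnlip : ∀ n x y, |Gn n x - Gn n y| ≤ M * |x - y| := by
    intro n x y
    have h1 := primitive_dist (hFncont n) (hFnabs n) (clmp 0 T x) (clmp 0 T y)
    refine h1.trans ?_
    exact mul_le_mul_of_nonneg_left (clmp_dist 0 T x y) hM0
  have hGnmem : ∀ n t, Gn n t ∈ Icc (0:ℝ) (M*T) := by
    intro n t
    constructor
    · exact intervalIntegral.integral_nonneg (clmp_mem hT1.le t).1 (fun u _ => (hFnb n u).1)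
    · calc Gn n t ≤ ∫ _s in (0:ℝ)..(clmp 0 T t), M :=
            intervalIntegral.integral_mono_on (clmp_mem hT1.le t).1
              ((hFncont n).intervalIntegrable _ _) intervalIntegrable_const
              (fun u _ => (hFnb n u).2)
        _ = clmp 0 T t * M := by rw [intervalIntegral.integral_const, smul_eq_mul, sub_zero]
        _ ≤ T * M := mul_le_mul_of_nonneg_right (clmp_mem hT1.le t).2 hM0
        _ = M * T := mul_comm _ _
  have higd_boundK : ∀ (u : ℝ → ℝ → ℝ) (nn : ℕ) (c s : ℝ),
      igd K f l η ξ T (dn nn) u c s ≤ K s * (fη * lξ) := by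
    intro u nn c s
    unfold igd
    have h1 := hfnn' _ (clmp_mem hη1.le (∫ r in (0:ℝ)..(clmp 0 T (s - dn nn)), u c r))
    have h1' := hfub _ (clmp_mem hη1.le (∫ r in (0:ℝ)..(clmp 0 T (s - dn nn)), u c r))
    have h2 := hlnn _ (mem_Ici.2 (clmp_mem hξ.le (u c (clmp 0 T (s - dn nn)))).1)
    have h2' := hlub _ (clmp_mem hξ.le (u c (clmp 0 T (s - dn nn))))
    have h3 := (hKpos s).le
    calc K s * f (clmp 0 η (∫ r in (0:ℝ)..(clmp 0 T (s - dn nn)), u c r))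
          * l (clmp 0 ξ (u c (clmp 0 T (s - dn nn))))
        ≤ K s * fη * lξ := by
          apply mul_le_mul _ h2' h2 (by positivity)
          exact mul_le_mul_of_nonneg_left h1' h3
      _ = K s * (fη * lξ) := by ring
  have hGnub : ∀ n, ∀ t ∈ Icc (0:ℝ) T, Gn n t ≤ fη * lξ * ∫ s in (0:ℝ)..t, K s := by
    intro n t ht
    have hc : clmp 0 T t = t := clmp_eq_self ht
    calc Gn n t = ∫ s in (0:ℝ)..t, Fn n s := by rw [hGndef]; simp only []; rw [hc]
      _ ≤ ∫ s in (0:ℝ)..t, K s * (fη * lξ) :=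
          intervalIntegral.integral_mono_on ht.1 ((hFncont n).intervalIntegrable _ _)
            ((hKc.mul continuous_const).intervalIntegrable _ _)
            (fun u _ => higd_boundK _ n _ u)
      _ = (∫ s in (0:ℝ)..t, K s) * (fη * lξ) := intervalIntegral.integral_mul_const _ _
      _ = fη * lξ * ∫ s in (0:ℝ)..t, K s := by ring
  have hGnid : ∀ n t, Gn n t = Gn n (clmp 0 T t) := by
    intro n t
    rw [hGndef]
    simp only []
    rw [clmp_idem 0 T t hT1.le]
  have hWnT : ∀ n, (∫ r in (0:ℝ)..T, vn n r) = η := fun n => (hcn n).2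
  -- ultrafilter limit
  set U : Ultrafilter ℕ := Ultrafilter.of Filter.atTop with hUdef
  have hUle : (U : Filter ℕ) ≤ Filter.atTop := Ultrafilter.of_le _
  have hcinfex : ∃ cinf ∈ Icc (0:ℝ) cstar, Filter.Tendsto cn (U : Filter ℕ) (𝓝 cinf) := by
    obtain ⟨cinf, hmem, hle⟩ := isCompact_Icc.ultrafilter_le_nhds (U.map cn) (by
      rw [Ultrafilter.coe_map, Filter.le_principal_iff, Filter.mem_map]
      exact Filter.univ_mem' (fun n => (hcn n).1))
    refine ⟨cinf, hmem, ?_⟩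
    rwa [Ultrafilter.coe_map] at hle
  obtain ⟨cinf, hcinfmem, hcinft⟩ := hcinfex
  have hGex : ∀ t : ℝ, ∃ g ∈ Icc (0:ℝ) (M*T),
      Filter.Tendsto (fun n => Gn n t) (U : Filter ℕ) (𝓝 g) := by
    intro t
    obtain ⟨g, hmem, hle⟩ := isCompact_Icc.ultrafilter_le_nhds (U.map (fun n => Gn n t)) (by
      rw [Ultrafilter.coe_map, Filter.le_principal_iff, Filter.mem_map]
      exact Filter.univ_mem' (fun n => hGnmem n t))
    refine ⟨g, hmem, ?_⟩
    rwa [Ultrafilter.coe_map] at hle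
  set G : ℝ → ℝ := fun t => (hGex t).choose with hGdef
  have hGmem : ∀ t, G t ∈ Icc (0:ℝ) (M*T) := fun t => (hGex t).choose_spec.1
  have hGt : ∀ t, Filter.Tendsto (fun n => Gn n t) (U : Filter ℕ) (𝓝 (G t)) :=
    fun t => (hGex t).choose_spec.2
  have hGlip : ∀ x y, |G x - G y| ≤ M * |x - y| := by
    intro x y
    exact le_of_tendsto (((hGt x).sub (hGt y)).abs)
      (Filter.Eventually.of_forall (fun n => hGnlip n x y))
  have hGub : ∀ t ∈ Icc (0:ℝ) T, G t ≤ fη * lξ * ∫ s in (0:ℝ)..t, K s := fun t ht =>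
    le_of_tendsto (hGt t) (Filter.Eventually.of_forall (fun n => hGnub n t ht))
  have hGnn : ∀ t, 0 ≤ G t := fun t => (hGmem t).1
  have hGid : ∀ t, G t = G (clmp 0 T t) := by
    intro t
    refine tendsto_nhds_unique (hGt t) ?_
    exact (hGt (clmp 0 T t)).congr (fun n => (hGnid n t).symm)
  have hcinf0 : 0 ≤ cinf := hcinfmem.1

  have hGuT : ∀ ε > (0:ℝ), ∀ᶠ n in (U : Filter ℕ), ∀ t ∈ Icc (0:ℝ) T, |Gn n t - G t| ≤ ε :=
    fun ε hε => unif_of_lip hT1 hM0 hGnlip hGlip (fun t _ => hGt t) hε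
  have hGuall : ∀ ε > (0:ℝ), ∀ᶠ n in (U : Filter ℕ), ∀ t : ℝ, |Gn n t - G t| ≤ ε := by
    intro ε hε
    filter_upwards [hGuT ε hε] with n hn t
    rw [hGnid n t, hGid t]
    exact hn _ (clmp_mem hT1.le t)
  -- the uniformly continuous envelope H₃
  set H₃ : ℝ × ℝ × ℝ → ℝ := fun q => Ψ ((q.1 + q.2.1)/p q.2.2) with hH₃def
  set K3 : Set (ℝ × ℝ × ℝ) := Icc (-1:ℝ) cstar ×ˢ (Icc (0:ℝ) (M*T) ×ˢ Icc (0:ℝ) T)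
    with hK3def
  have hK3c : IsCompact K3 := isCompact_Icc.prod (isCompact_Icc.prod isCompact_Icc)
  have hK3mem : ∀ q ∈ K3, q.2.2 ∈ Icc (0:ℝ) T := fun q hq => hq.2.2
  have hH₃cont : ContinuousOn H₃ K3 := by
    apply hΨc.comp_continuousOn
    apply ContinuousOn.div
    · fun_prop
    · exact hpc.comp (by fun_prop : Continuous fun q : ℝ × ℝ × ℝ => q.2.2).continuousOn
        (fun q hq => hsub (hK3mem q hq))
    · exact fun q hq => (hppos _ (hsub (hK3mem q hq))).ne'
  have hH₃u := hK3c.uniformContinuousOn_of_continuous hH₃cont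
  have hvform : ∀ n t, vn n t = H₃ (cn n, Gn n t, clmp 0 T t) := fun n t => hvfix n t
  set v : ℝ → ℝ := fun t => H₃ (cinf, G t, clmp 0 T t) with hvdef
  have hmemn : ∀ n (t:ℝ), (cn n, Gn n t, clmp 0 T t) ∈ K3 := by
    intro n t
    exact ⟨⟨by linarith [(hcn n).1.1], (hcn n).1.2⟩, hGnmem n t, clmp_mem hT1.le t⟩
  have hmeminf : ∀ t : ℝ, (cinf, G t, clmp 0 T t) ∈ K3 := by
    intro t
    exact ⟨⟨by linarith, hcinfmem.2⟩, hGmem t, clmp_mem hT1.le t⟩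
  have hcinfd : ∀ δ > (0:ℝ), ∀ᶠ n in (U : Filter ℕ), |cn n - cinf| < δ := by
    intro δ hδ
    have := Metric.tendsto_nhds.1 hcinft δ hδ
    filter_upwards [this] with n hn
    rwa [Real.dist_eq] at hn
  have hvu : ∀ ε > (0:ℝ), ∀ᶠ n in (U : Filter ℕ), ∀ t : ℝ, |vn n t - v t| ≤ ε := by
    intro ε hε
    obtain ⟨δ, hδpos, hδ⟩ := Metric.uniformContinuousOn_iff.1 hH₃u ε hε
    filter_upwards [hcinfd (δ/2) (by linarith), hGuall (δ/3) (by linarith)] with n hn1 hn2 t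
    have hd : dist ((cn n, Gn n t, clmp 0 T t) : ℝ × ℝ × ℝ) (cinf, G t, clmp 0 T t) < δ := by
      rw [Prod.dist_eq, Prod.dist_eq]
      apply max_lt
      · rw [Real.dist_eq]; linarith
      · apply max_lt
        · rw [Real.dist_eq]; linarith [hn2 t]
        · rw [Real.dist_eq]; simpa using hδpos
    have := hδ _ (hmemn n t) _ (hmeminf t) hd
    rw [Real.dist_eq] at this
    rw [hvform n t, hvdef]
    exact this.le
  -- limit function facts
  have hGcont : Continuous G := by
    have hl : LipschitzWith (Real.toNNReal M) G := by
      apply LipschitzWith.of_dist_le_mul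
      intro x y
      rw [Real.dist_eq, Real.dist_eq, Real.coe_toNNReal M hM0]
      exact hGlip x y
    exact hl.continuous
  have hvcont : Continuous v := by
    apply hH₃cont.comp_continuous
    · exact continuous_const.prodMk (hGcont.prodMk (clmp_continuous 0 T))
    · exact hmeminf
  have hvmem : ∀ t, v t ∈ Icc (0:ℝ) ξ := fun t => hΨmem _
  have hvabs : ∀ t, |v t| ≤ ξ := fun t => abs_le.2 ⟨by linarith [(hvmem t).1], (hvmem t).2⟩
  have hvnabs : ∀ n t, |vn n t| ≤ ξ := fun n t =>
    abs_le.2 ⟨by linarith [(hvnmem n t).1], (hvnmem n t).2⟩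
  set W : ℝ → ℝ := fun τ => ∫ r in (0:ℝ)..τ, v r with hWdef
  set Wn : ℕ → ℝ → ℝ := fun n τ => ∫ r in (0:ℝ)..τ, vn n r with hWndef
  have hWcont : Continuous W :=
    intervalIntegral.continuous_primitive (fun a b => hvcont.intervalIntegrable a b) 0
  have hWu : ∀ ε > (0:ℝ), ∀ᶠ n in (U : Filter ℕ), ∀ τ ∈ Icc (0:ℝ) T, |Wn n τ - W τ| ≤ ε := by
    intro ε hε
    have hε' : 0 < ε/(T+1) := by positivity
    filter_upwards [hvu (ε/(T+1)) hε'] with n hn τ hτ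
    have hsplit : Wn n τ - W τ = ∫ r in (0:ℝ)..τ, (vn n r - v r) := by
      rw [hWndef, hWdef]
      simp only []
      rw [intervalIntegral.integral_sub ((hvncont n).intervalIntegrable _ _)
        (hvcont.intervalIntegrable _ _)]
    rw [hsplit]
    have hb := intervalIntegral.norm_integral_le_of_norm_le_const
      (C := ε/(T+1)) (f := fun r => vn n r - v r) (a := 0) (b := τ)
      (fun r _ => by rw [Real.norm_eq_abs]; exact hn r)
    rw [Real.norm_eq_abs] at hb
    have : |τ - 0| ≤ T := by rw [sub_zero, abs_of_nonneg hτ.1]; exact hτ.2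
    calc |∫ r in (0:ℝ)..τ, (vn n r - v r)| ≤ ε/(T+1) * |τ - 0| := hb
      _ ≤ ε/(T+1) * T := by apply mul_le_mul_of_nonneg_left this hε'.le
      _ ≤ ε := by rw [div_mul_eq_mul_div, div_le_iff₀ (by linarith : (0:ℝ) < T+1)]; nlinarith
  have hWnmem : ∀ n, ∀ τ ∈ Icc (0:ℝ) T, Wn n τ ∈ Icc (0:ℝ) (T*ξ) := by
    intro n τ hτ
    constructor
    · exact intervalIntegral.integral_nonneg hτ.1 (fun u _ => (hvnmem n u).1)
    · calc Wn n τ ≤ ∫ _r in (0:ℝ)..τ, ξ := intervalIntegral.integral_mono_on hτ.1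
            ((hvncont n).intervalIntegrable _ _) intervalIntegrable_const
            (fun u _ => (hvnmem n u).2)
        _ = τ * ξ := by rw [intervalIntegral.integral_const, smul_eq_mul, sub_zero]
        _ ≤ T * ξ := mul_le_mul_of_nonneg_right hτ.2 hξ.le
  have hWmem : ∀ τ ∈ Icc (0:ℝ) T, W τ ∈ Icc (0:ℝ) (T*ξ) := by
    intro τ hτ
    constructor
    · exact intervalIntegral.integral_nonneg hτ.1 (fun u _ => (hvmem u).1)
    · calc W τ ≤ ∫ _r in (0:ℝ)..τ, ξ := intervalIntegral.integral_mono_on hτ.1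
            (hvcont.intervalIntegrable _ _) intervalIntegrable_const
            (fun u _ => (hvmem u).2)
        _ = τ * ξ := by rw [intervalIntegral.integral_const, smul_eq_mul, sub_zero]
        _ ≤ T * ξ := mul_le_mul_of_nonneg_right hτ.2 hξ.le

  -- uniform convergence of the integrands
  set Fh : ℝ × ℝ → ℝ := fun q => f (clmp 0 η q.1) * l (clmp 0 ξ q.2) with hFhdef
  set Q : Set (ℝ × ℝ) := Icc (0:ℝ) (T*ξ) ×ˢ Icc (0:ℝ) ξ with hQdef
  have hQc : IsCompact Q := isCompact_Icc.prod isCompact_Icc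
  have hFhcont : Continuous Fh :=
    (hfc.comp ((clmp_continuous 0 η).comp continuous_fst)).mul (hlξc.comp continuous_snd)
  have hFhu := hQc.uniformContinuousOn_of_continuous hFhcont.continuousOn
  set F : ℝ → ℝ := fun s => K s * f (clmp 0 η (W s)) * l (clmp 0 ξ (v s)) with hFdef
  have hFcont : Continuous F :=
    ((hKc.mul (hfc.comp ((clmp_continuous 0 η).comp hWcont))).mul (hlξc.comp hvcont))
  have hFval : ∀ s, F s = K s * Fh (W s, v s) := by
    intro s
    rw [hFdef, hFhdef]
    simp only []
    ring
  have hFnval : ∀ n s, Fn n s = K s * Fh (Wn n (clmp 0 T (s - dn n)),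
      vn n (clmp 0 T (s - dn n))) := by
    intro n s
    rw [hFndef, hFhdef, hWndef, hvndef]
    simp only []
    unfold igd
    ring
  have hdnU : ∀ δ > (0:ℝ), ∀ᶠ n in (U : Filter ℕ), dn n < δ := by
    intro δ hδ
    have h0 : Filter.Tendsto dn Filter.atTop (𝓝 0) := by
      have h1 := (tendsto_const_div_atTop_nhds_zero_nat T).comp (Filter.tendsto_add_atTop_nat 1)
      have h2 : ((fun n : ℕ => T / (n:ℝ)) ∘ (fun n : ℕ => n + 1)) = dn := by
        funext n
        rw [hdndef]
        simp only [Function.comp_apply]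
        push_cast
        ring_nf
      rwa [h2] at h1
    have := Metric.tendsto_nhds.1 h0 δ hδ
    refine (this.filter_mono hUle).mono ?_
    intro n hn
    rw [Real.dist_eq, sub_zero, abs_of_pos (hdnpos n)] at hn
    exact hn
  have hFu : ∀ ε > (0:ℝ), ∀ᶠ n in (U : Filter ℕ), ∀ s ∈ Icc (0:ℝ) T, |Fn n s - F s| ≤ ε := by
    intro ε hε
    have hε1 : 0 < ε / (Kmax + 1) := by positivity
    obtain ⟨δ, hδpos, hδ⟩ := Metric.uniformContinuousOn_iff.1 hFhu (ε/(Kmax+1)) hε1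
    obtain ⟨δ2, hδ2pos, hδ2⟩ := Metric.uniformContinuousOn_iff.1 hH₃u (δ/4) (by linarith)
    filter_upwards [hvu (δ/4) (by linarith), hWu (δ/4) (by linarith),
      hdnU (δ2/(M+1)) (by positivity), hdnU (δ/(4*(ξ+1))) (by positivity),
      hdnU δ2 hδ2pos] with n hn1 hn2 hn3 hn4 hn5 s hs
    set σ : ℝ := clmp 0 T (s - dn n) with hσdef
    have hσmem : σ ∈ Icc (0:ℝ) T := clmp_mem hT1.le _
    have hσs : |σ - s| ≤ dn n := by
      rw [hσdef]
      calc |clmp 0 T (s - dn n) - s| = |clmp 0 T (s - dn n) - clmp 0 T s| := by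
            rw [clmp_eq_self hs]
        _ ≤ |s - dn n - s| := clmp_dist 0 T _ _
        _ = dn n := by rw [show s - dn n - s = -(dn n) by ring, abs_neg,
            abs_of_pos (hdnpos n)]
    -- first coordinate estimate
    have hWc : |Wn n σ - W s| < δ/2 := by
      have h1 : |Wn n σ - W σ| ≤ δ/4 := hn2 σ hσmem
      have h2 : |W σ - W s| ≤ ξ * |σ - s| := primitive_dist hvcont hvabs σ s
      have h3 : ξ * |σ - s| ≤ ξ * dn n := mul_le_mul_of_nonneg_left hσs hξ.le
      have h4 : ξ * dn n < δ/4 := by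
        have hξ1 : ξ * dn n ≤ (ξ+1) * dn n :=
          mul_le_mul_of_nonneg_right (by linarith only) (hdnpos n).le
        calc ξ * dn n ≤ (ξ+1) * dn n := hξ1
          _ < (ξ+1) * (δ/(4*(ξ+1))) := by
              apply mul_lt_mul_of_pos_left hn4 (by linarith)
          _ = δ/4 := by field_simp
      calc |Wn n σ - W s| ≤ |Wn n σ - W σ| + |W σ - W s| := by
            have := abs_sub_le (Wn n σ) (W σ) (W s); linarith
        _ < δ/2 := by linarith
    -- second coordinate estimate
    have hvsσ : |v σ - v s| < δ/4 := by
      have hd : dist ((cinf, G σ, clmp 0 T σ) : ℝ × ℝ × ℝ) (cinf, G s, clmp 0 T s) < δ2 := by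
        rw [Prod.dist_eq, Prod.dist_eq]
        apply max_lt
        · rw [Real.dist_eq]; simpa using hδ2pos
        · apply max_lt
          · rw [Real.dist_eq]
            calc |G σ - G s| ≤ M * |σ - s| := hGlip σ s
              _ ≤ M * dn n := mul_le_mul_of_nonneg_left hσs hM0
              _ ≤ (M+1) * dn n :=
                  mul_le_mul_of_nonneg_right (by linarith only) (hdnpos n).le
              _ < (M+1) * (δ2/(M+1)) := by
                  apply mul_lt_mul_of_pos_left hn3 (by linarith)
              _ = δ2 := by field_simp
          · rw [Real.dist_eq, clmp_eq_self hσmem, clmp_eq_self hs]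
            exact lt_of_le_of_lt hσs hn5
      have := hδ2 _ (hmeminf σ) _ (hmeminf s) hd
      rwa [Real.dist_eq] at this
    have hvc : |vn n σ - v s| < δ/2 := by
      have h1 : |vn n σ - v σ| ≤ δ/4 := hn1 σ
      calc |vn n σ - v s| ≤ |vn n σ - v σ| + |v σ - v s| := by
            have := abs_sub_le (vn n σ) (v σ) (v s); linarith
        _ < δ/2 := by linarith
    -- combine
    have hdQ : dist ((Wn n σ, vn n σ) : ℝ × ℝ) (W s, v s) < δ := by
      rw [Prod.dist_eq]
      apply max_lt
      · rw [Real.dist_eq]; linarith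
      · rw [Real.dist_eq]; linarith
    have hFh := hδ _ (⟨hWnmem n σ hσmem, hvnmem n σ⟩ : _ ∈ Q)
      _ (⟨hWmem s hs, hvmem s⟩ : _ ∈ Q) hdQ
    rw [Real.dist_eq] at hFh
    rw [hFnval n s, hFval s]
    rw [← hσdef]
    have hKs := hKpos s
    calc |K s * Fh (Wn n σ, vn n σ) - K s * Fh (W s, v s)|
        = K s * |Fh (Wn n σ, vn n σ) - Fh (W s, v s)| := by
          rw [← mul_sub, abs_mul, abs_of_pos hKs]
      _ ≤ Kmax * (ε/(Kmax+1)) := by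
          apply mul_le_mul (hKub s) hFh.le (abs_nonneg _) hKmax0.le
      _ ≤ ε := by
          have h1 : Kmax * (ε/(Kmax+1)) ≤ (Kmax+1) * (ε/(Kmax+1)) :=
            mul_le_mul_of_nonneg_right (by linarith only) hε1.le
          have h2 : (Kmax+1) * (ε/(Kmax+1)) = ε := by
            field_simp
          linarith only [h1, h2]

  have hGlim : ∀ t ∈ Icc (0:ℝ) T, G t = ∫ s in (0:ℝ)..t, F s := by
    intro t ht
    refine tendsto_nhds_unique (hGt t) (tendsto_of_eventually_abs ?_)
    intro ε hε
    have hε' : 0 < ε/(T+1) := by positivity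
    filter_upwards [hFu (ε/(T+1)) hε'] with n hn
    have hGnt : Gn n t = ∫ s in (0:ℝ)..t, Fn n s := by
      rw [hGndef]; simp only []; rw [clmp_eq_self ht]
    rw [hGnt]
    have hsplit : (∫ s in (0:ℝ)..t, Fn n s) - ∫ s in (0:ℝ)..t, F s
        = ∫ s in (0:ℝ)..t, (Fn n s - F s) := by
      rw [intervalIntegral.integral_sub ((hFncont n).intervalIntegrable _ _)
        (hFcont.intervalIntegrable _ _)]
    rw [hsplit]
    have hb := intervalIntegral.norm_integral_le_of_norm_le_const
      (C := ε/(T+1)) (f := fun s => Fn n s - F s) (a := 0) (b := t) (by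
        intro s hs
        rw [Real.norm_eq_abs]
        apply hn
        rw [uIoc_of_le ht.1] at hs
        exact ⟨hs.1.le, hs.2.trans ht.2⟩)
    rw [Real.norm_eq_abs] at hb
    have hta : |t - 0| ≤ T := by rw [sub_zero, abs_of_nonneg ht.1]; exact ht.2
    calc |∫ s in (0:ℝ)..t, (Fn n s - F s)| ≤ ε/(T+1) * |t - 0| := hb
      _ ≤ ε/(T+1) * T := mul_le_mul_of_nonneg_left hta hε'.le
      _ ≤ ε := by
          rw [div_mul_eq_mul_div, div_le_iff₀ (by linarith only [hT1] : (0:ℝ) < T+1)]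
          nlinarith [hε.le, hT1.le]
  have hWT : W T = η := by
    have h1 : Filter.Tendsto (fun n => Wn n T) (U : Filter ℕ) (𝓝 (W T)) := by
      apply tendsto_of_eventually_abs
      intro ε hε
      filter_upwards [hWu ε hε] with n hn
      exact hn T ⟨hT1.le, le_rfl⟩
    have h2 : (fun n => Wn n T) = fun _ => η := by
      funext n
      rw [hWndef]
      exact hWnT n
    rw [h2] at h1
    exact tendsto_nhds_unique h1 tendsto_const_nhds
  -- final pointwise identities
  have hargmem : ∀ t ∈ Icc (0:ℝ) T, 0 ≤ (cinf + G t) / p t ∧ (cinf + G t) / p t ≤ B := by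
    intro t ht
    have hpt : 0 < p t := hppos t (hsub ht)
    constructor
    · exact div_nonneg (by linarith only [hcinf0, hGnn t]) hpt.le
    · have h1 : (cinf + G t)/p t = cinf/p t + G t/p t := by rw [add_div]
      have h2 : cinf / p t ≤ cstar / p₀ :=
        div_le_div₀ hcstarpos.le hcinfmem.2 hp₀pos (hp₀le t (hsub ht))
      have h2' : cstar / p₀ = p₁ / p₀ * φ (η/T) := by
        rw [hcstardef, mul_div_right_comm]
      have hGt' : G t ≤ fη * lξ * ∫ s in (0:ℝ)..t, p s * a s := by
        have := hGub t ht
        rwa [← hintKpa t ht] at this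
      have h3 : G t / p t ≤ fη * lξ * ((p t)⁻¹ * ∫ s in (0:ℝ)..t, p s * a s) := by
        rw [div_eq_inv_mul]
        calc (p t)⁻¹ * G t ≤ (p t)⁻¹ * (fη * lξ * ∫ s in (0:ℝ)..t, p s * a s) :=
            mul_le_mul_of_nonneg_left hGt' (inv_nonneg.2 hpt.le)
          _ = fη * lξ * ((p t)⁻¹ * ∫ s in (0:ℝ)..t, p s * a s) := by ring
      have h4 := hθub t ht
      have h5 : fη * lξ * ((p t)⁻¹ * ∫ s in (0:ℝ)..t, p s * a s) ≤ fη * lξ * Θ :=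
        mul_le_mul_of_nonneg_left h4 (by positivity)
      have e0 : 0 ≤ Θ * fη * lξ := by positivity
      have h6 : fη * lξ * Θ ≤ 2 * Θ * fη * lξ := by nlinarith [e0]
      rw [hBdef]
      linarith only [h1, h2, h2', h3, h5, h6]
  have hval : ∀ t ∈ Icc (0:ℝ) T, φ (v t) = (cinf + G t) / p t := by
    intro t ht
    have harg := hargmem t ht
    have hvt : v t = Ψ ((cinf + G t)/p t) := by
      rw [hvdef, hH₃def]
      simp only []
      rw [clmp_eq_self ht]
    rw [hvt]
    exact hΨr _ ⟨harg.1, le_of_lt (lt_of_le_of_lt harg.2 hsmall)⟩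
  have hvlt : ∀ t ∈ Icc (0:ℝ) T, v t < ξ := by
    intro t ht
    rcases lt_or_eq_of_le (hvmem t).2 with h | h
    · exact h
    · exfalso
      have hveq := hval t ht
      rw [h] at hveq
      have h2 := (hargmem t ht).2
      rw [← hveq] at h2
      exact absurd (lt_of_le_of_lt h2 hsmall) (lt_irrefl _)
  have hWmono : ∀ x y : ℝ, x ≤ y → W x ≤ W y := by
    intro x y hxy
    have hsub2 : W y - W x = ∫ r in x..y, v r := by
      rw [hWdef]
      simp only []
      rw [intervalIntegral.integral_interval_sub_left (hvcont.intervalIntegrable _ _)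
        (hvcont.intervalIntegrable _ _)]
    have h0 : 0 ≤ ∫ r in x..y, v r :=
      intervalIntegral.integral_nonneg hxy (fun u _ => (hvmem u).1)
    linarith only [hsub2, h0]
  have hW0 : W 0 = 0 := intervalIntegral.integral_same
  have hmain : ∀ t ∈ Icc (0:ℝ) T, p t * φ (v t) = cinf + ∫ s in (0:ℝ)..t, F s := by
    intro t ht
    have hpt : p t ≠ 0 := (hppos t (hsub ht)).ne'
    rw [hval t ht, ← hGlim t ht]
    field_simp
  refine ⟨W, v, ?_, hvcont.continuousOn, hW0, hWT, ?_, ?_, ?_, ?_⟩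
  · intro t _
    exact (cont_primitive_hasDerivAt hvcont t).hasDerivWithinAt
  · intro t ht
    constructor
    · rw [← hW0]; exact hWmono 0 t ht.1
    · rw [← hWT]; exact hWmono t T ht.2
  · intro t ht
    have hIoo : Ioo (0:ℝ) T ∈ 𝓝 t := isOpen_Ioo.mem_nhds ht
    have hev : (fun s => p s * φ (v s)) =ᶠ[𝓝 t] (fun s => cinf + ∫ u in (0:ℝ)..s, F u) := by
      filter_upwards [hIoo] with s hs
      exact hmain s ⟨hs.1.le, hs.2.le⟩
    have hder : HasDerivAt (fun s => cinf + ∫ u in (0:ℝ)..s, F u) (F t) t :=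
      (cont_primitive_hasDerivAt hFcont t).const_add cinf
    have hder2 := hder.congr_of_eventuallyEq hev
    have htmem : t ∈ Icc (0:ℝ) T := ⟨ht.1.le, ht.2.le⟩
    have hWt : W t ∈ Icc (0:ℝ) η := by
      constructor
      · rw [← hW0]; exact hWmono 0 t ht.1.le
      · rw [← hWT]; exact hWmono t T ht.2.le
    have hFt : F t = p t * a t * f (W t) * l |v t| := by
      rw [hFdef]
      simp only []
      rw [hKdef]
      simp only []
      rw [clmp_eq_self htmem, clmp_eq_self hWt,
        clmp_eq_self ⟨(hvmem t).1, (hvmem t).2⟩, abs_of_nonneg (hvmem t).1]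
    rw [← hFt]
    exact hder2
  · intro t ht
    refine ⟨(hvmem t).1, ?_⟩
    rw [hval t ht]
    exact (hargmem t ht).2
  · exact hvlt
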